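/- In the Uvarov setting, the vector of jet-pairings of the perturbed polynomial satisfies the linear system ⟨P̂^{[1]}_n(x), (β)_x⟩ · (I_{Np} + ⟨𝒥^{[0,1]}_{K_{n−1}}(x), (β)_x⟩) = ⟨P^{[1]}_n(x), (β)_x⟩. -/

import Mathlib

open Polynomial Matrix Finset

namespace Paper

abbrev Mat (p : ℕ) := Matrix (Fin p) (Fin p) ℂ
abbrev MatPoly (p : ℕ) := Matrix (Fin p) (Fin p) (Polynomial ℂ)

variable {p : ℕ}

/-- Embed a constant matrix as a matrix polynomial. -/
noncomputable def cm (A : Mat p) : MatPoly p := A.map Polynomial.C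

/-- The monomial `I_p x^k` as a matrix polynomial. -/
noncomputable def monoM (p k : ℕ) : MatPoly p := Matrix.diagonal (fun _ => (Polynomial.X : Polynomial ℂ) ^ k)

/-- The `k`-th matrix coefficient of a matrix polynomial. -/
noncomputable def coeffM (P : MatPoly p) (k : ℕ) : Mat p := Matrix.of fun i j => (P i j).coeff k

/-- Entrywise derivative of a matrix polynomial. -/
noncomputable def dM : MatPoly p → MatPoly p := fun P => Matrix.of fun i j => Polynomial.derivative (P i j)

/-- Evaluation of a matrix polynomial at a scalar point. -/
noncomputable def evM (z : ℂ) (P : MatPoly p) : Mat p := Matrix.of fun i j => (P i j).eval z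

/-- `P` is monic of exact degree `n`. -/
def MonicDeg (P : MatPoly p) (n : ℕ) : Prop :=
  coeffM P n = 1 ∧ ∀ k, n < k → coeffM P k = 0

/-- Sesquilinear form on matrix polynomials: left `ℂ^{p×p}`-linear in the first slot,
`⟨P, AQ + R⟩ = ⟨P,Q⟩Aᵀ + ⟨P,R⟩` in the second slot. -/
def IsSesq (S : MatPoly p → MatPoly p → Mat p) : Prop :=
  (∀ (A : Mat p) (P Q R : MatPoly p), S (cm A * P + Q) R = A * S P R + S Q R) ∧
  (∀ (A : Mat p) (P Q R : MatPoly p), S P (cm A * Q + R) = S P Q * Aᵀ + S P R)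

end Paper

namespace Paper

variable {p : ℕ}

/-- Jet index set: pairs (point j, derivative order m < κ j). -/
abbrev JIdx (q : ℕ) (κ : Fin q → ℕ) := Σ j : Fin q, Fin (κ j)

/-- The `a`-th `p×p` block (a jet index) of the column jet `𝒥^{[0,1]}_{K_{n-1}}(x)`:
the `y`-jet of the Christoffel–Darboux kernel `K_{n-1}(x,y)` at the point `xpt a.1`,
derivative order `a.2`, divided by `(a.2)!`; a matrix polynomial in `x`. -/
noncomputable def KBlock {q : ℕ} {κ : Fin q → ℕ} (P1 P2 : ℕ → MatPoly p) (H : ℕ → Mat p)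
    (xpt : Fin q → ℂ) (n : ℕ) (a : JIdx q κ) : MatPoly p :=
  ∑ k ∈ Finset.range n,
    cm ((((Nat.factorial (a.2 : ℕ) : ℂ))⁻¹ • evM (xpt a.1) (dM^[(a.2 : ℕ)] (P2 k)))ᵀ * (H k)⁻¹)
      * P1 k

/-- The `Np×Np` matrix of pairings `⟨𝒥^{[0,1]}_{K_{n-1}}(x), (β)_x⟩`. -/
noncomputable def PairM {q : ℕ} {κ : Fin q → ℕ} (β : JIdx q κ → MatPoly p → Mat p)
    (P1 P2 : ℕ → MatPoly p) (H : ℕ → Mat p) (xpt : Fin q → ℂ) (n : ℕ) :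
    Matrix (JIdx q κ × Fin p) (JIdx q κ × Fin p) ℂ :=
  Matrix.of fun a b => (β b.1 (KBlock P1 P2 H xpt n a.1)) a.2 b.2

/-- The `p×Np` row of pairings `⟨P(x), (β)_x⟩`. -/
noncomputable def RowB {q : ℕ} {κ : Fin q → ℕ} (β : JIdx q κ → MatPoly p → Mat p)
    (P : MatPoly p) : Matrix (Fin p) (JIdx q κ × Fin p) ℂ :=
  Matrix.of fun s b => (β b.1 P) s b.2

/-- The `p×Np` spectral jet `𝒥_f` of a matrix polynomial at the points `xpt j`,
with multiplicities `κ j`. -/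
noncomputable def JetRow {q : ℕ} (κ : Fin q → ℕ) (xpt : Fin q → ℂ) (f : MatPoly p) :
    Matrix (Fin p) (JIdx q κ × Fin p) ℂ :=
  Matrix.of fun s a =>
    ((Nat.factorial (a.1.2 : ℕ) : ℂ)⁻¹ • evM (xpt a.1.1) (dM^[(a.1.2 : ℕ)] f)) s a.2

/-- The `Np×p` jet `𝒥^{[0,1]}_{K_{n-1}}(x)` as a matrix with polynomial entries. -/
noncomputable def Jet01 {q : ℕ} (κ : Fin q → ℕ) (P1 P2 : ℕ → MatPoly p) (H : ℕ → Mat p)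
    (xpt : Fin q → ℂ) (n : ℕ) : Matrix (JIdx q κ × Fin p) (Fin p) (Polynomial ℂ) :=
  Matrix.of fun a t => (KBlock (κ := κ) P1 P2 H xpt n a.1) a.2 t

end Paper

namespace Paper

variable {p : ℕ}

lemma cm_eq_hom (A : Mat p) : cm A = (Polynomial.C.mapMatrix : Mat p →+* MatPoly p) A := rfl

lemma cm_one : cm (1 : Mat p) = 1 := by rw [cm_eq_hom, _root_.map_one]
lemma cm_neg_one : cm (-1 : Mat p) = -1 := by rw [cm_eq_hom, _root_.map_neg, _root_.map_one]
lemma cm_mul (A B : Mat p) : cm (A * B) = cm A * cm B := by rw [cm_eq_hom, _root_.map_mul]; rfl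
lemma cm_sum {ι} (s : Finset ι) (f : ι → Mat p) : cm (∑ i ∈ s, f i) = ∑ i ∈ s, cm (f i) := by
  rw [cm_eq_hom, _root_.map_sum]; rfl
lemma cm_neg (A : Mat p) : cm (-A) = -cm A := by rw [cm_eq_hom, _root_.map_neg]; rfl

lemma coeffM_add (P Q : MatPoly p) (k : ℕ) : coeffM (P + Q) k = coeffM P k + coeffM Q k := by
  ext i j; simp [coeffM]

lemma coeffM_sub (P Q : MatPoly p) (k : ℕ) : coeffM (P - Q) k = coeffM P k - coeffM Q k := by
  ext i j; simp [coeffM, Matrix.sub_apply]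

lemma coeffM_cm_mul (A : Mat p) (P : MatPoly p) (k : ℕ) :
    coeffM (cm A * P) k = A * coeffM P k := by
  ext i j
  simp [coeffM, cm, Matrix.mul_apply, Polynomial.finset_sum_coeff, Polynomial.coeff_C_mul]

lemma eq_zero_of_coeffM (D : MatPoly p) (h : ∀ k, coeffM D k = 0) : D = 0 := by
  ext i j k
  have := congrFun (congrFun (h k) i) j
  simpa [coeffM] using this

/-- Expansion of a matrix polynomial of degree `< n` in a monic basis. -/
lemma decompM (B : ℕ → MatPoly p) (hB : ∀ k, MonicDeg (B k) k) :
    ∀ (n : ℕ) (D : MatPoly p), (∀ k, n ≤ k → coeffM D k = 0) →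
      ∃ A : ℕ → Mat p, D = ∑ k ∈ Finset.range n, cm (A k) * B k := by
  intro n
  induction n with
  | zero =>
    intro D hD
    exact ⟨0, by simpa using eq_zero_of_coeffM D fun k => hD k (Nat.zero_le k)⟩
  | succ n ih =>
    intro D hD
    have hside : ∀ k, n ≤ k → coeffM (D - cm (coeffM D n) * B n) k = 0 := by
      intro k hk
      rw [coeffM_sub, coeffM_cm_mul]
      rcases eq_or_lt_of_le hk with h | h
      · rw [← h, (hB n).1, mul_one, sub_self]
      · rw [hD k h, (hB n).2 k h, mul_zero, sub_self]
    obtain ⟨A, hA⟩ := ih (D - cm (coeffM D n) * B n) hside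
    refine ⟨fun k => if k = n then coeffM D n else A k, ?_⟩
    show D = ∑ k ∈ Finset.range (n + 1), cm (if k = n then coeffM D n else A k) * B k
    have h2 : ∑ k ∈ Finset.range n, cm (if k = n then coeffM D n else A k) * B k
        = ∑ k ∈ Finset.range n, cm (A k) * B k :=
      Finset.sum_congr rfl fun k hk => by
        rw [if_neg (Nat.ne_of_lt (Finset.mem_range.mp hk))]
    rw [Finset.sum_range_succ, if_pos rfl, h2, ← hA, sub_add_cancel]

section Sesq

variable {S : MatPoly p → MatPoly p → Mat p}

lemma sesq_zero_left (hS : IsSesq S) (R : MatPoly p) : S 0 R = 0 := by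
  have h := hS.1 1 0 R R
  rw [cm_one, one_mul, zero_add, one_mul] at h
  exact right_eq_add.mp h

lemma sesq_zero_right (hS : IsSesq S) (P : MatPoly p) : S P 0 = 0 := by
  have h := hS.2 1 P 0 P
  rw [cm_one, one_mul, zero_add, Matrix.transpose_one, mul_one] at h
  exact right_eq_add.mp h

lemma sesq_add_left (hS : IsSesq S) (P Q R : MatPoly p) : S (P + Q) R = S P R + S Q R := by
  have h := hS.1 1 P Q R
  rwa [cm_one, one_mul, one_mul] at h

lemma sesq_sum_left (hS : IsSesq S) {ι} (s : Finset ι) (A : ι → Mat p) (f : ι → MatPoly p) (R : MatPoly p) :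
    S (∑ k ∈ s, cm (A k) * f k) R = ∑ k ∈ s, A k * S (f k) R := by
  classical
  induction s using Finset.induction with
  | empty => simpa using sesq_zero_left hS R
  | insert _ _ h ih => rw [Finset.sum_insert h, Finset.sum_insert h, hS.1, ih]

lemma sesq_sum_right (hS : IsSesq S) {ι} (s : Finset ι) (A : ι → Mat p) (f : ι → MatPoly p) (P : MatPoly p) :
    S P (∑ k ∈ s, cm (A k) * f k) = ∑ k ∈ s, S P (f k) * (A k)ᵀ := by
  classical
  induction s using Finset.induction with
  | empty => simpa using sesq_zero_right hS P
  | insert _ _ h ih => rw [Finset.sum_insert h, Finset.sum_insert h, hS.2, ih]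

end Sesq

section Beta

variable {q : ℕ} {κ : Fin q → ℕ} {β : JIdx q κ → MatPoly p → Mat p}

lemma beta_zero (hβ : ∀ a (A : Mat p) (P Q : MatPoly p), β a (cm A * P + Q) = A * β a P + β a Q) (a : JIdx q κ) : β a 0 = 0 := by
  have h := hβ a 1 0 0
  rw [cm_one, one_mul, zero_add, one_mul] at h
  exact right_eq_add.mp h

lemma beta_cm_mul (hβ : ∀ a (A : Mat p) (P Q : MatPoly p), β a (cm A * P + Q) = A * β a P + β a Q) (a : JIdx q κ) (A : Mat p) (P : MatPoly p) : β a (cm A * P) = A * β a P := by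
  have h := hβ a A P 0
  rwa [add_zero, beta_zero hβ, add_zero] at h

lemma beta_add (hβ : ∀ a (A : Mat p) (P Q : MatPoly p), β a (cm A * P + Q) = A * β a P + β a Q) (a : JIdx q κ) (P Q : MatPoly p) : β a (P + Q) = β a P + β a Q := by
  have h := hβ a 1 P Q
  rwa [cm_one, one_mul, one_mul] at h

lemma beta_sub (hβ : ∀ a (A : Mat p) (P Q : MatPoly p), β a (cm A * P + Q) = A * β a P + β a Q) (a : JIdx q κ) (P Q : MatPoly p) : β a (P - Q) = β a P - β a Q := by
  have hn : β a (-Q) = -β a Q := by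
    have := beta_cm_mul hβ a (-1) Q
    rwa [cm_neg_one, neg_one_mul, neg_one_mul] at this
  rw [sub_eq_add_neg, beta_add hβ, hn, sub_eq_add_neg]

lemma beta_sum (hβ : ∀ a (A : Mat p) (P Q : MatPoly p), β a (cm A * P + Q) = A * β a P + β a Q) {ι} (a : JIdx q κ) (s : Finset ι) (A : ι → Mat p) (f : ι → MatPoly p) :
    β a (∑ k ∈ s, cm (A k) * f k) = ∑ k ∈ s, A k * β a (f k) := by
  classical
  induction s using Finset.induction with
  | empty => simpa using beta_zero hβ a
  | insert _ _ h ih => rw [Finset.sum_insert h, Finset.sum_insert h, hβ, ih]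

end Beta

lemma dM_transpose (Q : MatPoly p) : dM Qᵀ = (dM Q)ᵀ := rfl

lemma dM_iter_transpose (m : ℕ) (Q : MatPoly p) : dM^[m] Qᵀ = (dM^[m] Q)ᵀ := by
  induction m generalizing Q with
  | zero => rfl
  | succ m ih => rw [Function.iterate_succ_apply, Function.iterate_succ_apply, dM_transpose, ih]

lemma evM_transpose (z : ℂ) (Q : MatPoly p) : evM z Qᵀ = (evM z Q)ᵀ := rfl

end Paper
open Paper in
/-- In the Uvarov setting, the row of pairings of the perturbed polynomial
satisfies `⟨P̂^{[1]}_n(x),(β)_x⟩ · (I_{Np} + ⟨𝒥^{[0,1]}_{K_{n−1}}(x),(β)_x⟩) = ⟨P^{[1]}_n(x),(β)_x⟩`. -/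
theorem statement8 (p q : ℕ) (κ : Fin q → ℕ) (hκ : ∀ j, 0 < κ j) (xpt : Fin q → ℂ)
    (hx : Function.Injective xpt)
    (u uh : MatPoly p → MatPoly p → Mat p) (hu : IsSesq u) (huh : IsSesq uh)
    (β : JIdx q κ → MatPoly p → Mat p)
    (hβ : ∀ a (A : Mat p) (P Q : MatPoly p), β a (cm A * P + Q) = A * β a P + β a Q)
    (hv : ∀ P Q : MatPoly p, uh P Q = u P Q + ∑ a : JIdx q κ,
        (Nat.factorial (a.2 : ℕ) : ℂ)⁻¹ • (β a P * evM (xpt a.1) (dM^[(a.2 : ℕ)] Qᵀ)))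
    (P1 P2 hP1 hP2 : ℕ → MatPoly p) (H Hh : ℕ → Mat p)
    (hmon1 : ∀ k, MonicDeg (P1 k) k) (hmon2 : ∀ k, MonicDeg (P2 k) k)
    (hmon1h : ∀ k, MonicDeg (hP1 k) k) (hmon2h : ∀ k, MonicDeg (hP2 k) k)
    (hH : ∀ k, IsUnit (H k)) (hHh : ∀ k, IsUnit (Hh k))
    (hbio : ∀ k l, u (P1 k) (P2 l) = if k = l then H k else 0)
    (hbioh : ∀ k l, uh (hP1 k) (hP2 l) = if k = l then Hh k else 0)
    (n : ℕ)
    :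
    RowB β (hP1 n) * (1 + PairM β P1 P2 H xpt n) = RowB β (P1 n) := by
  classical
  -- Step 1: expand `hP1 n - P1 n` in the basis `P1`.
  have hcoef : ∀ k, n ≤ k → coeffM (hP1 n - P1 n) k = 0 := by
    intro k hk
    rw [coeffM_sub]
    rcases eq_or_lt_of_le hk with h | h
    · rw [← h, (hmon1h n).1, (hmon1 n).1, sub_self]
    · rw [(hmon1h n).2 k h, (hmon1 n).2 k h, sub_self]
  obtain ⟨A, hA⟩ := decompM P1 hmon1 n _ hcoef
  have hP1n : hP1 n = P1 n + ∑ k ∈ Finset.range n, cm (A k) * P1 k := by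
    rw [← hA, add_comm, sub_add_cancel]
  -- Step 2: for `l < n`, `u (hP1 n) (P2 l) = A l * H l`.
  have hval : ∀ l, l < n → u (hP1 n) (P2 l) = A l * H l := by
    intro l hl
    rw [hP1n, sesq_add_left hu, sesq_sum_left hu, hbio, if_neg (Nat.ne_of_gt hl), zero_add]
    rw [Finset.sum_eq_single l (fun k _ hkl => by rw [hbio, if_neg hkl, mul_zero])
      (fun h => absurd (Finset.mem_range.mpr hl) h), hbio, if_pos rfl]
  -- Step 3: for `l < n`, `uh (hP1 n) (P2 l) = 0`.
  have hzero : ∀ l, l < n → uh (hP1 n) (P2 l) = 0 := by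
    intro l hl
    obtain ⟨Bc, hBc⟩ := decompM hP2 hmon2h (l + 1) (P2 l) (fun k hk => (hmon2 l).2 k hk)
    rw [hBc, sesq_sum_right huh]
    refine Finset.sum_eq_zero fun m hm => ?_
    rw [hbioh, if_neg (Nat.ne_of_gt (lt_of_le_of_lt
      (Nat.lt_succ_iff.mp (Finset.mem_range.mp hm)) hl)), zero_mul]
  -- Step 4: explicit formula for `A l`.
  have hAval : ∀ l, l < n →
      A l = (-(∑ a : JIdx q κ, (Nat.factorial (a.2 : ℕ) : ℂ)⁻¹ •
          (β a (hP1 n) * evM (xpt a.1) (dM^[(a.2 : ℕ)] (P2 l)ᵀ)))) * (H l)⁻¹ := by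
    intro l hl
    have h0 := hzero l hl
    rw [hv, hval l hl] at h0
    have h1 := eq_neg_of_add_eq_zero_left h0
    have hd : IsUnit (H l).det := (Matrix.isUnit_iff_isUnit_det _).mp (hH l)
    calc A l = A l * H l * (H l)⁻¹ := (Matrix.mul_nonsing_inv_cancel_right _ _ hd).symm
      _ = _ := by rw [h1]
  -- Step 5: rewrite the blocks of the kernel jet.
  have hkb : ∀ a : JIdx q κ, KBlock (κ := κ) P1 P2 H xpt n a
      = ∑ k ∈ Finset.range n, cm ((Nat.factorial (a.2 : ℕ) : ℂ)⁻¹ •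
          (evM (xpt a.1) (dM^[(a.2 : ℕ)] (P2 k)ᵀ) * (H k)⁻¹)) * P1 k := by
    intro a
    refine Finset.sum_congr rfl fun k _ => ?_
    rw [Matrix.transpose_smul, smul_mul_assoc, dM_iter_transpose, evM_transpose]
  -- Step 6: the Uvarov connection formula.
  have hMain : hP1 n = P1 n -
      ∑ a : JIdx q κ, cm (β a (hP1 n)) * KBlock (κ := κ) P1 P2 H xpt n a := by
    have hswap : ∑ a : JIdx q κ, cm (β a (hP1 n)) * KBlock (κ := κ) P1 P2 H xpt n a
        = ∑ k ∈ Finset.range n,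
            cm ((∑ a : JIdx q κ, (Nat.factorial (a.2 : ℕ) : ℂ)⁻¹ •
              (β a (hP1 n) * evM (xpt a.1) (dM^[(a.2 : ℕ)] (P2 k)ᵀ))) * (H k)⁻¹) * P1 k := by
      simp only [hkb, Finset.mul_sum]
      rw [Finset.sum_comm]
      refine Finset.sum_congr rfl fun k _ => ?_
      simp only [← mul_assoc, ← cm_mul]
      rw [← Finset.sum_mul, ← cm_sum]
      rw [Finset.sum_mul]
      simp only [smul_mul_assoc, mul_assoc, mul_smul_comm]
    conv_lhs => rw [hP1n]
    rw [hswap, sub_eq_add_neg, ← Finset.sum_neg_distrib]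
    congr 1
    refine Finset.sum_congr rfl fun l hl => ?_
    rw [hAval l (Finset.mem_range.mp hl), neg_mul, cm_neg, neg_mul]
  -- Step 7: apply the functionals `β b`.
  have hrow : ∀ b : JIdx q κ, β b (P1 n) = β b (hP1 n) +
      ∑ a : JIdx q κ, β a (hP1 n) * β b (KBlock (κ := κ) P1 P2 H xpt n a) := by
    intro b
    have h := congrArg (β b) hMain
    rw [beta_sub hβ, beta_sum hβ] at h
    rw [h]
    abel
  -- Step 8: assemble the matrix identity.
  rw [Matrix.mul_add, Matrix.mul_one]
  ext s bt
  obtain ⟨b, t⟩ := bt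
  rw [Matrix.add_apply, Matrix.mul_apply]
  have hsum : ∑ x : JIdx q κ × Fin p,
      RowB β (hP1 n) s x * PairM β P1 P2 H xpt n x (b, t)
      = ∑ a : JIdx q κ, (β a (hP1 n) * β b (KBlock (κ := κ) P1 P2 H xpt n a)) s t := by
    rw [Fintype.sum_prod_type]
    refine Finset.sum_congr rfl fun a _ => ?_
    rw [Matrix.mul_apply]
    rfl
  rw [hsum]
  have h := congrArg (fun M : Mat p => M s t) (hrow b)
  simp only [Matrix.add_apply, Matrix.sum_apply] at h
  exact h.symm
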